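/- Let I = I(C_{2n+1}) be the edge ideal of the odd cycle C_{2n+1}. Then I^(n+1) = I^{n+1} + (x_1 x_2 ⋯ x_{2n+1}), and moreover x_1 x_2 ⋯ x_{2n+1} ∉ I^{n+1} (so a single generator must be added to I^{n+1} to obtain I^(n+1)). -/

import Mathlib

open MvPolynomial

noncomputable section

/-- The ideal generated by the variables indexed by `S`. -/
def varIdeal (K : Type*) [Field K] (N : ℕ) (S : Finset (Fin N)) :
    Ideal (MvPolynomial (Fin N) K) :=
  Ideal.span ((fun i => (X i : MvPolynomial (Fin N) K)) '' S)

/-- The edge ideal of a graph `G`, generated by `X i * X j` for edges `{i, j}`. -/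
def edgeIdeal (K : Type*) [Field K] {N : ℕ} (G : SimpleGraph (Fin N)) :
    Ideal (MvPolynomial (Fin N) K) :=
  Ideal.span {p | ∃ i j, G.Adj i j ∧ p = X i * X j}

/-- `S` is a vertex cover of `G`: every edge meets `S`. -/
def IsVertexCover {N : ℕ} (G : SimpleGraph (Fin N)) (S : Finset (Fin N)) : Prop :=
  ∀ ⦃i j : Fin N⦄, G.Adj i j → i ∈ S ∨ j ∈ S

/-- `S` is a minimal vertex cover of `G`. -/
def IsMinVertexCover {N : ℕ} (G : SimpleGraph (Fin N)) (S : Finset (Fin N)) : Prop :=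
  IsVertexCover G S ∧ ∀ T ⊂ S, ¬ IsVertexCover G T

/-- The `t`-th symbolic power of the edge ideal of `G`:
the intersection of the `t`-th powers of the minimal vertex cover primes. -/
def symbolicPower (K : Type*) [Field K] {N : ℕ} (G : SimpleGraph (Fin N)) (t : ℕ) :
    Ideal (MvPolynomial (Fin N) K) :=
  ⨅ (S : Finset (Fin N)) (_ : IsMinVertexCover G S), varIdeal K N S ^ t

/-- The cycle graph on `Fin m`, with edges `{i, i+1 mod m}`. -/
def cycleGraph (m : ℕ) : SimpleGraph (Fin m) :=
  SimpleGraph.fromRel (fun i j => (j : ℕ) = ((i : ℕ) + 1) % m)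

/-- The set `L(t)` of monomials of degree at least `2t` whose weight with respect to every
minimal vertex cover is at least `t`. -/
def Lset (K : Type*) [Field K] {N : ℕ} (G : SimpleGraph (Fin N)) (t : ℕ) :
    Set (MvPolynomial (Fin N) K) :=
  {p | ∃ a : Fin N →₀ ℕ, p = monomial a 1 ∧ 2 * t ≤ ∑ i, a i ∧
    ∀ S : Finset (Fin N), IsMinVertexCover G S → t ≤ ∑ i ∈ S, a i}

/-- The set `D(t)` of monomials of degree less than `2t` whose weight with respect to every
minimal vertex cover is at least `t`. -/
def Dset (K : Type*) [Field K] {N : ℕ} (G : SimpleGraph (Fin N)) (t : ℕ) :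
    Set (MvPolynomial (Fin N) K) :=
  {p | ∃ a : Fin N →₀ ℕ, p = monomial a 1 ∧ (∑ i, a i) < 2 * t ∧
    ∀ S : Finset (Fin N), IsMinVertexCover G S → t ≤ ∑ i ∈ S, a i}

/-- `α(J)`: the least total degree of a nonzero polynomial in `J`. -/
def alphaDeg {K : Type*} [Field K] {N : ℕ} (J : Ideal (MvPolynomial (Fin N) K)) : ℕ :=
  sInf {d | ∃ f ∈ J, f ≠ 0 ∧ f.totalDegree = d}

/-- The symbolic defect: the minimal number of generators one must add to `I(G)^t`
to obtain the symbolic power `I(G)^(t)`. -/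
def sdefect (K : Type*) [Field K] {N : ℕ} (G : SimpleGraph (Fin N)) (t : ℕ) : ℕ :=
  sInf {c | ∃ F : Finset (MvPolynomial (Fin N) K), F.card = c ∧
    symbolicPower K G t = edgeIdeal K G ^ t + Ideal.span (F : Set (MvPolynomial (Fin N) K))}

/-- The graph consisting of the odd cycle on vertices `0, …, 2n` (that is,
`x_1, …, x_{2n+1}`) together with one extra vertex `2n+1` (that is, `x_{2n+2}`)
joined to vertex `0` (that is, `x_1`) by an edge. -/
def appendedCycle (n : ℕ) : SimpleGraph (Fin (2 * n + 2)) :=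
  SimpleGraph.fromRel (fun i j =>
    ((j : ℕ) = (i : ℕ) + 1 ∧ (j : ℕ) ≤ 2 * n) ∨
    ((i : ℕ) = 2 * n ∧ (j : ℕ) = 0) ∨
    ((i : ℕ) = 0 ∧ (j : ℕ) = 2 * n + 1))

section Lemmas

variable {K : Type*} [Field K] {N : ℕ}

lemma monomial_mem_varIdeal_pow {S : Finset (Fin N)} {t : ℕ} {a : Fin N →₀ ℕ} (c : K)
    (h : t ≤ ∑ i ∈ S, a i) :
    (monomial a c : MvPolynomial (Fin N) K) ∈ varIdeal K N S ^ t := by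
  induction t generalizing a with
  | zero => simp
  | succ t ih =>
    have hpos : 0 < ∑ i ∈ S, a i := lt_of_lt_of_le (Nat.succ_pos t) h
    obtain ⟨i, hiS, hai⟩ : ∃ i ∈ S, 0 < a i := by
      by_contra hc; push_neg at hc
      rw [Finset.sum_eq_zero (fun i hi => Nat.le_zero.mp (hc i hi))] at hpos
      exact lt_irrefl 0 hpos
    set a' : Fin N →₀ ℕ := a - Finsupp.single i 1 with ha'
    have ha'app : ∀ j, a' j = a j - (Finsupp.single i 1) j := by
      intro j; rw [ha']; exact Finsupp.tsub_apply a (Finsupp.single i 1) j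
    have key : a = Finsupp.single i 1 + a' := by
      ext j
      rw [Finsupp.add_apply, ha'app j]
      rcases eq_or_ne j i with rfl | hji
      · rw [Finsupp.single_eq_same]; omega
      · rw [Finsupp.single_eq_of_ne' (Ne.symm hji)]; omega
    have hsum : t ≤ ∑ j ∈ S, a' j := by
      have h1 : ∑ j ∈ S.erase i, a' j = ∑ j ∈ S.erase i, a j := by
        apply Finset.sum_congr rfl
        intro j hj
        have hji : j ≠ i := Finset.ne_of_mem_erase hj
        rw [ha'app j, Finsupp.single_eq_of_ne' (Ne.symm hji)]; omega
      have h2 : ∑ j ∈ S.erase i, a j + a i = ∑ j ∈ S, a j := Finset.sum_erase_add S _ hiS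
      have h3 : ∑ j ∈ S.erase i, a' j + a' i = ∑ j ∈ S, a' j := Finset.sum_erase_add S _ hiS
      have h4 : a' i = a i - 1 := by rw [ha'app i, Finsupp.single_eq_same]
      omega
    have hX : (X i : MvPolynomial (Fin N) K) = monomial (Finsupp.single i 1) 1 := rfl
    have hdecomp : (monomial a c : MvPolynomial (Fin N) K)
        = X i * monomial a' c := by
      rw [hX, monomial_mul, one_mul, ← key]
    rw [hdecomp, pow_succ']
    exact Ideal.mul_mem_mul
      (Ideal.subset_span ⟨i, by simpa using hiS, rfl⟩) (ih hsum)

lemma weight_of_mem_varIdeal {S : Finset (Fin N)} {f : MvPolynomial (Fin N) K}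
    (hf : f ∈ varIdeal K N S) :
    ∀ a ∈ f.support, 1 ≤ ∑ i ∈ S, a i := by
  refine Submodule.span_induction ?_ ?_ ?_ ?_ hf
  · rintro p ⟨i, hi, rfl⟩ a ha
    simp only [Finset.mem_coe] at hi
    change a ∈ (X i : MvPolynomial (Fin N) K).support at ha
    rw [MvPolynomial.support_X, Finset.mem_singleton] at ha
    subst ha
    rw [Finset.sum_eq_single_of_mem i hi (by intro j hj hji; simp [Finsupp.single_apply, hji.symm])]
    simp
  · intro a ha; simp at ha
  · intro p q _ _ hp hq a ha
    rcases Finset.mem_union.mp (MvPolynomial.support_add ha) with h | h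
    · exact hp a h
    · exact hq a h
  · intro r p _ hp a ha
    have := MvPolynomial.support_mul r p ha
    rw [Finset.mem_add] at this
    obtain ⟨b, hb, c, hc, rfl⟩ := this
    have := hp c hc
    have hle : ∑ i ∈ S, c i ≤ ∑ i ∈ S, (b + c) i :=
      Finset.sum_le_sum (fun i _ => by simp)
    omega

lemma weight_of_mem_varIdeal_pow {S : Finset (Fin N)} {t : ℕ} {f : MvPolynomial (Fin N) K}
    (hf : f ∈ varIdeal K N S ^ t) :
    ∀ a ∈ f.support, t ≤ ∑ i ∈ S, a i := by
  induction t generalizing f with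
  | zero => intro a _; exact Nat.zero_le _
  | succ t ih =>
    rw [pow_succ] at hf
    refine Submodule.mul_induction_on hf ?_ ?_
    · intro p hp q hq a ha
      have := MvPolynomial.support_mul p q ha
      rw [Finset.mem_add] at this
      obtain ⟨b, hb, c, hc, rfl⟩ := this
      have h1 := ih hp b hb
      have h2 := weight_of_mem_varIdeal hq c hc
      have : ∑ i ∈ S, (b + c) i = ∑ i ∈ S, b i + ∑ i ∈ S, c i := by
        rw [← Finset.sum_add_distrib]; apply Finset.sum_congr rfl; intro i _; simp
      omega
    · intro p q hp hq a ha
      rcases Finset.mem_union.mp (MvPolynomial.support_add ha) with h | h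
      · exact hp a h
      · exact hq a h

lemma mem_symbolicPower_iff {G : SimpleGraph (Fin N)} {t : ℕ} {f : MvPolynomial (Fin N) K} :
    f ∈ symbolicPower K G t ↔
      ∀ S : Finset (Fin N), IsMinVertexCover G S → f ∈ varIdeal K N S ^ t := by
  simp [symbolicPower, Ideal.mem_iInf]

lemma exists_min_cover_subset {G : SimpleGraph (Fin N)} :
    ∀ (T : Finset (Fin N)), IsVertexCover G T → ∃ S ⊆ T, IsMinVertexCover G S := by
  intro T
  induction T using Finset.strongInduction with
  | _ T ih =>
    intro hT
    by_cases h : ∀ T' ⊂ T, ¬ IsVertexCover G T'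
    · exact ⟨T, Finset.Subset.refl T, hT, h⟩
    · push_neg at h
      obtain ⟨T', hT'sub, hT'⟩ := h
      obtain ⟨S, hS, hSmin⟩ := ih T' hT'sub hT'
      exact ⟨S, hS.trans hT'sub.subset, hSmin⟩

end Lemmas
section Cycle

variable {K : Type*} [Field K]

lemma fin_val_add_one {m : ℕ} [NeZero m] (i : Fin m) :
    ((i + 1 : Fin m) : ℕ) = ((i : ℕ) + 1) % m := by
  rw [Fin.val_add, Fin.val_one', Nat.add_mod_mod]

lemma cycleGraph_adj {m : ℕ} [NeZero m] {i j : Fin m} :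
    (cycleGraph m).Adj i j ↔ i ≠ j ∧ (j = i + 1 ∨ i = j + 1) := by
  rw [cycleGraph, SimpleGraph.fromRel_adj]
  constructor
  · rintro ⟨hne, h | h⟩
    · refine ⟨hne, Or.inl ?_⟩
      apply Fin.ext
      rw [fin_val_add_one]; exact h
    · refine ⟨hne, Or.inr ?_⟩
      apply Fin.ext
      rw [fin_val_add_one]; exact h
  · rintro ⟨hne, h | h⟩
    · exact ⟨hne, Or.inl (by rw [h, fin_val_add_one])⟩
    · exact ⟨hne, Or.inr (by rw [h, fin_val_add_one])⟩

lemma cycleGraph_adj_succ {n : ℕ} (hn : 1 ≤ n) (i : Fin (2 * n + 1)) :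
    (cycleGraph (2 * n + 1)).Adj i (i + 1) := by
  haveI : NeZero (2 * n + 1) := ⟨by omega⟩
  rw [cycleGraph_adj]
  refine ⟨?_, Or.inl rfl⟩
  intro h
  have heq := congrArg Fin.val h
  rw [fin_val_add_one] at heq
  have hi := i.isLt
  by_cases hlt : (i : ℕ) + 1 < 2 * n + 1
  · rw [Nat.mod_eq_of_lt hlt] at heq; omega
  · have h2 : (i : ℕ) + 1 = 2 * n + 1 := by omega
    rw [h2, Nat.mod_self] at heq
    omega

lemma cover_card_ge {n : ℕ} (hn : 1 ≤ n) {S : Finset (Fin (2 * n + 1))}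
    (h : IsVertexCover (cycleGraph (2 * n + 1)) S) : n + 1 ≤ S.card := by
  haveI : NeZero (2 * n + 1) := ⟨by omega⟩
  classical
  set f : Fin (2 * n + 1) → Fin (2 * n + 1) := fun i => if i ∈ S then i else i + 1 with hf
  have hfS : ∀ i, f i ∈ S := by
    intro i
    by_cases hi : i ∈ S
    · simpa [hf, hi] using hi
    · rcases h (cycleGraph_adj_succ hn i) with h1 | h1
      · exact absurd h1 hi
      · simpa [hf, hi] using h1
  have hcard : (Finset.univ : Finset (Fin (2 * n + 1))).card
      ≤ 2 * ((Finset.univ : Finset (Fin (2 * n + 1))).image f).card := by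
    apply Finset.card_le_mul_card_image
    intro v _
    have hsub : (Finset.univ.filter (fun a => f a = v)) ⊆ {v, v - 1} := by
      intro i hi
      rw [Finset.mem_filter] at hi
      have hi2 := hi.2
      by_cases hiS : i ∈ S
      · rw [hf] at hi2; simp only [if_pos hiS] at hi2
        simp [hi2]
      · rw [hf] at hi2; simp only [if_neg hiS] at hi2
        have : i = v - 1 := by rw [← hi2]; exact (add_sub_cancel_right i 1).symm
        simp [this]
    calc (Finset.univ.filter (fun a => f a = v)).card ≤ ({v, v - 1} : Finset _).card :=
          Finset.card_le_card hsub
      _ ≤ 2 := Finset.card_insert_le _ _ |>.trans (by simp)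
  have himg : (Finset.univ.image f) ⊆ S := by
    intro v hv
    obtain ⟨i, _, rfl⟩ := Finset.mem_image.mp hv
    exact hfS i
  have := hcard.trans (Nat.mul_le_mul_left 2 (Finset.card_le_card himg))
  simp only [Finset.card_univ, Fintype.card_fin] at this
  omega

end Cycle
section Prod

variable {K : Type*} [Field K] {N : ℕ}

lemma prod_X_eq (s : Finset (Fin N)) :
    (∏ i ∈ s, X i : MvPolynomial (Fin N) K) = monomial (∑ i ∈ s, Finsupp.single i 1) 1 := by
  induction s using Finset.induction with
  | empty => simp [monomial_zero']
  | insert a s hx ih =>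
    rw [Finset.prod_insert hx, Finset.sum_insert hx, ih, ← pow_one (X a),
      X_pow_eq_monomial, monomial_mul, one_mul]

def onesFinsupp (N : ℕ) : Fin N →₀ ℕ := ∑ i : Fin N, Finsupp.single i 1

lemma onesFinsupp_apply (j : Fin N) : onesFinsupp N j = 1 := by
  rw [onesFinsupp, Finset.sum_apply']
  rw [Finset.sum_eq_single_of_mem j (Finset.mem_univ j)]
  · simp
  · intro i _ hij
    exact Finsupp.single_eq_of_ne' hij

lemma prod_X_univ_eq :
    (∏ i, X i : MvPolynomial (Fin N) K) = monomial (onesFinsupp N) 1 :=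
  prod_X_eq Finset.univ

lemma monomial_mem_span_prod_X {a : Fin N →₀ ℕ} (h : ∀ i, 1 ≤ a i) :
    (monomial a 1 : MvPolynomial (Fin N) K)
      ∈ Ideal.span {(∏ i, X i : MvPolynomial (Fin N) K)} := by
  rw [Ideal.mem_span_singleton, prod_X_univ_eq]
  refine ⟨monomial (a - onesFinsupp N) 1, ?_⟩
  rw [monomial_mul, one_mul]
  have key : onesFinsupp N + (a - onesFinsupp N) = a := by
    ext j
    rw [Finsupp.add_apply, Finsupp.tsub_apply, onesFinsupp_apply]
    have := h j
    omega
  rw [key]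

lemma edgeIdeal_le_varIdeal {G : SimpleGraph (Fin N)} {S : Finset (Fin N)}
    (h : IsVertexCover G S) : edgeIdeal K G ≤ varIdeal K N S := by
  rw [edgeIdeal, Ideal.span_le]
  rintro p ⟨i, j, hadj, rfl⟩
  rcases h hadj with hi | hj
  · exact Ideal.mul_mem_right _ _ (Ideal.subset_span ⟨i, by simpa using hi, rfl⟩)
  · exact Ideal.mul_mem_left _ _ (Ideal.subset_span ⟨j, by simpa using hj, rfl⟩)

lemma rhs_le_symbolic {n : ℕ} (hn : 1 ≤ n) :
    edgeIdeal K (cycleGraph (2 * n + 1)) ^ (n + 1)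
        + Ideal.span {∏ i, (X i : MvPolynomial (Fin (2 * n + 1)) K)}
      ≤ symbolicPower K (cycleGraph (2 * n + 1)) (n + 1) := by
  apply sup_le
  · rw [symbolicPower, le_iInf_iff]
    intro S
    rw [le_iInf_iff]
    intro hS
    exact Ideal.pow_right_mono (edgeIdeal_le_varIdeal hS.1) _
  · rw [symbolicPower, le_iInf_iff]
    intro S
    rw [le_iInf_iff]
    intro hS
    rw [Ideal.span_le, Set.singleton_subset_iff, prod_X_univ_eq]
    apply monomial_mem_varIdeal_pow
    have h1 : ∑ i ∈ S, onesFinsupp (2 * n + 1) i = S.card := by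
      rw [Finset.sum_congr rfl (fun i _ => onesFinsupp_apply i)]
      simp
    rw [h1]
    exact cover_card_ge hn hS.1

end Prod
section PathPack

/-- Weak LP duality (exact for paths): if every vertex cover of the path on
`[lo, hi)` has `a`-weight at least `t`, then `t` edges can be packed into `a`. -/
lemma path_pack : ∀ (k t lo hi : ℕ) (a : ℕ → ℕ), t + (hi - lo) ≤ k →
    (∀ T : Finset ℕ, T ⊆ Finset.Ico lo hi →
      (∀ i, lo ≤ i → i + 1 < hi → (i ∈ T ∨ i + 1 ∈ T)) → t ≤ ∑ v ∈ T, a v) →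
    ∃ L : List ℕ, L.length = t ∧ (∀ i ∈ L, lo ≤ i ∧ i + 1 < hi) ∧
      ∀ v, L.countP (fun i => decide (i = v ∨ i + 1 = v)) ≤ a v := by
  intro k
  induction k with
  | zero =>
    intro t lo hi a hk H
    have ht : t = 0 := by omega
    subst ht
    exact ⟨[], rfl, by simp, by simp⟩
  | succ k ih =>
    intro t lo hi a hk H
    by_cases hedge : hi ≤ lo + 1
    · -- no edges: the empty set is a cover
      have h0 := H ∅ (Finset.empty_subset _) (by intro i h1 h2; omega)
      simp only [Finset.sum_empty] at h0
      have ht : t = 0 := by omega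
      subst ht
      exact ⟨[], rfl, by simp, by simp⟩
    · push_neg at hedge
      by_cases hlo : a lo = 0
      · -- drop vertex lo
        have H' : ∀ T : Finset ℕ, T ⊆ Finset.Ico (lo + 1) hi →
            (∀ i, lo + 1 ≤ i → i + 1 < hi → (i ∈ T ∨ i + 1 ∈ T)) → t ≤ ∑ v ∈ T, a v := by
          intro T hTsub hTcov
          have hloT : lo ∉ T := by
            intro hmem
            have := hTsub hmem
            rw [Finset.mem_Ico] at this
            omega
          have h1 := H (insert lo T)
            (by
              intro v hv
              rcases Finset.mem_insert.mp hv with rfl | hv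
              · rw [Finset.mem_Ico]; omega
              · have := hTsub hv; rw [Finset.mem_Ico] at this ⊢; omega)
            (by
              intro i h1 h2
              rcases Nat.eq_or_lt_of_le h1 with rfl | h3
              · exact Or.inl (Finset.mem_insert_self _ _)
              · rcases hTcov i h3 h2 with h | h
                · exact Or.inl (Finset.mem_insert_of_mem h)
                · exact Or.inr (Finset.mem_insert_of_mem h))
          rw [Finset.sum_insert hloT, hlo, zero_add] at h1
          exact h1
        obtain ⟨L, hL1, hL2, hL3⟩ := ih t (lo + 1) hi a (by omega) H'
        exact ⟨L, hL1, fun i hi' => ⟨by have := (hL2 i hi').1; omega, (hL2 i hi').2⟩, hL3⟩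
      · by_cases hlo1 : a (lo + 1) = 0
        · -- drop vertices lo, lo+1
          have H' : ∀ T : Finset ℕ, T ⊆ Finset.Ico (lo + 2) hi →
              (∀ i, lo + 2 ≤ i → i + 1 < hi → (i ∈ T ∨ i + 1 ∈ T)) → t ≤ ∑ v ∈ T, a v := by
            intro T hTsub hTcov
            have hloT : lo + 1 ∉ T := by
              intro hmem
              have := hTsub hmem
              rw [Finset.mem_Ico] at this
              omega
            have h1 := H (insert (lo + 1) T)
              (by
                intro v hv
                rcases Finset.mem_insert.mp hv with rfl | hv
                · rw [Finset.mem_Ico]; omega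
                · have := hTsub hv; rw [Finset.mem_Ico] at this ⊢; omega)
              (by
                intro i h1 h2
                rcases Nat.lt_or_ge i (lo + 2) with h3 | h3
                · rcases Nat.eq_or_lt_of_le h1 with rfl | h4
                  · exact Or.inr (Finset.mem_insert_self _ _)
                  · have : i = lo + 1 := by omega
                    subst this
                    exact Or.inl (Finset.mem_insert_self _ _)
                · rcases hTcov i h3 h2 with h | h
                  · exact Or.inl (Finset.mem_insert_of_mem h)
                  · exact Or.inr (Finset.mem_insert_of_mem h))
            rw [Finset.sum_insert hloT, hlo1, zero_add] at h1
            exact h1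
          obtain ⟨L, hL1, hL2, hL3⟩ := ih t (lo + 2) hi a (by omega) H'
          exact ⟨L, hL1, fun i hi' => ⟨by have := (hL2 i hi').1; omega, (hL2 i hi').2⟩, hL3⟩
        · -- use the edge {lo, lo+1}
          rcases Nat.eq_zero_or_pos t with rfl | htpos
          · exact ⟨[], rfl, by simp, by simp⟩
          set a' : ℕ → ℕ := fun v => if v = lo ∨ v = lo + 1 then a v - 1 else a v with ha'
          have ha'lo : a' lo = a lo - 1 := by rw [ha']; exact if_pos (Or.inl rfl)
          have ha'lo1 : a' (lo + 1) = a (lo + 1) - 1 := by rw [ha']; exact if_pos (Or.inr rfl)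
          have ha'other : ∀ v, v ≠ lo → v ≠ lo + 1 → a' v = a v := by
            intro v h1 h2; rw [ha']; exact if_neg (by tauto)
          have H' : ∀ T : Finset ℕ, T ⊆ Finset.Ico lo hi →
              (∀ i, lo ≤ i → i + 1 < hi → (i ∈ T ∨ i + 1 ∈ T)) → t - 1 ≤ ∑ v ∈ T, a' v := by
            intro T hTsub hTcov
            have hbase := H T hTsub hTcov
            have hmem := hTcov lo le_rfl hedge
            have hsplit : ∑ v ∈ T, a v = ∑ v ∈ T, a' v
                + ((if lo ∈ T then 1 else 0) + (if lo + 1 ∈ T then 1 else 0)) := by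
              have hptw : ∀ v ∈ T, a v = a' v
                  + ((if v = lo then 1 else 0) + (if v = lo + 1 then 1 else 0)) := by
                intro v _
                by_cases h1 : v = lo
                · subst h1; rw [ha'lo, if_pos rfl, if_neg (by omega)]; omega
                · by_cases h2 : v = lo + 1
                  · subst h2; rw [ha'lo1, if_neg h1, if_pos rfl]; omega
                  · rw [ha'other v h1 h2, if_neg h1, if_neg h2]; omega
              rw [Finset.sum_congr rfl hptw, Finset.sum_add_distrib, Finset.sum_add_distrib,
                Finset.sum_ite_eq' T lo (fun _ => 1), Finset.sum_ite_eq' T (lo + 1) (fun _ => 1)]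
            by_cases hboth : lo ∈ T ∧ lo + 1 ∈ T
            · -- T minus lo is still a cover
              have hcov' : t ≤ ∑ v ∈ T.erase lo, a v := by
                apply H (T.erase lo) ((Finset.erase_subset _ _).trans hTsub)
                intro i h1 h2
                rcases Nat.eq_or_lt_of_le h1 with rfl | h3
                · exact Or.inr (Finset.mem_erase.mpr ⟨by omega, hboth.2⟩)
                · rcases hTcov i (by omega) h2 with h | h
                  · exact Or.inl (Finset.mem_erase.mpr ⟨by omega, h⟩)
                  · exact Or.inr (Finset.mem_erase.mpr ⟨by omega, h⟩)
              have herase : ∑ v ∈ T.erase lo, a v + a lo = ∑ v ∈ T, a v :=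
                Finset.sum_erase_add T a hboth.1
              rw [if_pos hboth.1, if_pos hboth.2] at hsplit
              omega
            · have hone : (if lo ∈ T then 1 else 0) + (if lo + 1 ∈ T then (1:ℕ) else 0) ≤ 1 := by
                rcases hmem with h | h
                · by_cases h' : lo + 1 ∈ T
                  · exact absurd ⟨h, h'⟩ hboth
                  · simp [h, h']
                · by_cases h' : lo ∈ T
                  · exact absurd ⟨h', h⟩ hboth
                  · simp [h, h']
              omega
          obtain ⟨L, hL1, hL2, hL3⟩ := ih (t - 1) lo hi a' (by omega) H'
          refine ⟨lo :: L, by simp only [List.length_cons, hL1]; omega, ?_, ?_⟩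
          · intro i hi'
            rcases List.mem_cons.mp hi' with rfl | hi'
            · exact ⟨le_rfl, hedge⟩
            · exact hL2 i hi'
          · intro v
            rw [List.countP_cons]
            have hLv := hL3 v
            simp only [decide_eq_true_eq]
            by_cases h1 : v = lo
            · subst h1
              rw [ha'lo] at hLv
              rw [if_pos (Or.inl rfl)]
              omega
            · by_cases h2 : v = lo + 1
              · subst h2
                rw [ha'lo1] at hLv
                rw [if_pos (Or.inr rfl)]
                omega
              · rw [ha'other v h1 h2] at hLv
                rw [if_neg (by omega : ¬ (lo = v ∨ lo + 1 = v))]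
                omega

end PathPack
section ListPack

variable {K : Type*} [Field K]

lemma list_pack_mem {n : ℕ} (hn : 1 ≤ n) :
    ∀ (L : List ℕ) (b : Fin (2 * n + 1) →₀ ℕ),
    (∀ i ∈ L, i + 1 < 2 * n) →
    (∀ v : Fin (2 * n + 1), (L.countP (fun i => decide (i = (v : ℕ) ∨ i + 1 = (v : ℕ)))) ≤ b v) →
    (monomial b 1 : MvPolynomial (Fin (2 * n + 1)) K)
      ∈ edgeIdeal K (cycleGraph (2 * n + 1)) ^ L.length := by
  haveI : NeZero (2 * n + 1) := ⟨by omega⟩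
  intro L
  induction L with
  | nil =>
    intro b _ _
    simp only [List.length_nil, pow_zero, Ideal.one_eq_top]
    exact Submodule.mem_top
  | cons i L' ih =>
    intro b hedges hcount
    have hi1 : i + 1 < 2 * n := hedges i List.mem_cons_self
    set vi : Fin (2 * n + 1) := ⟨i, by omega⟩ with hvi
    set vi1 : Fin (2 * n + 1) := ⟨i + 1, by omega⟩ with hvi1
    have hvine : vi ≠ vi1 := by
      intro h
      have := congrArg Fin.val h
      simp [hvi, hvi1] at this
    have hbi : 1 ≤ b vi := by
      have h := hcount vi
      rw [List.countP_cons,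
        if_pos (decide_eq_true (Or.inl rfl : i = (vi : ℕ) ∨ i + 1 = (vi : ℕ)))] at h
      omega
    have hbi1 : 1 ≤ b vi1 := by
      have h := hcount vi1
      rw [List.countP_cons,
        if_pos (decide_eq_true (Or.inr rfl : i = (vi1 : ℕ) ∨ i + 1 = (vi1 : ℕ)))] at h
      omega
    set b' : Fin (2 * n + 1) →₀ ℕ := b - Finsupp.single vi 1 - Finsupp.single vi1 1 with hb'
    have hb'app : ∀ v, b' v = b v - (Finsupp.single vi 1) v - (Finsupp.single vi1 1) v := by
      intro v
      rw [hb', Finsupp.tsub_apply, Finsupp.tsub_apply]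
    have hb'vi : b' vi = b vi - 1 := by
      rw [hb'app, Finsupp.single_eq_same, Finsupp.single_eq_of_ne' (Ne.symm hvine)]; omega
    have hb'vi1 : b' vi1 = b vi1 - 1 := by
      rw [hb'app, Finsupp.single_eq_same, Finsupp.single_eq_of_ne' hvine]; omega
    have hb'other : ∀ v, v ≠ vi → v ≠ vi1 → b' v = b v := by
      intro v h1 h2
      rw [hb'app, Finsupp.single_eq_of_ne' (Ne.symm h1), Finsupp.single_eq_of_ne' (Ne.symm h2)]
      omega
    have key : b = (Finsupp.single vi 1 + Finsupp.single vi1 1) + b' := by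
      ext v
      rw [Finsupp.add_apply, Finsupp.add_apply]
      by_cases h1 : v = vi
      · subst h1
        rw [hb'vi, Finsupp.single_eq_same, Finsupp.single_eq_of_ne' hvine.symm]
        omega
      · by_cases h2 : v = vi1
        · subst h2
          rw [hb'vi1, Finsupp.single_eq_same, Finsupp.single_eq_of_ne' hvine]
          omega
        · rw [hb'other v h1 h2, Finsupp.single_eq_of_ne' (Ne.symm h1),
            Finsupp.single_eq_of_ne' (Ne.symm h2)]
          omega
    have hadj : (cycleGraph (2 * n + 1)).Adj vi vi1 := by
      rw [cycleGraph_adj]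
      refine ⟨hvine, Or.inl ?_⟩
      apply Fin.ext
      rw [fin_val_add_one]
      simp only [hvi, hvi1]
      rw [Nat.mod_eq_of_lt (by omega)]
    have hXX : (X vi * X vi1 : MvPolynomial (Fin (2 * n + 1)) K)
        = monomial (Finsupp.single vi 1 + Finsupp.single vi1 1) 1 := by
      rw [← pow_one (X vi), ← pow_one (X vi1), X_pow_eq_monomial, X_pow_eq_monomial,
        monomial_mul, one_mul]
    have hdecomp : (monomial b 1 : MvPolynomial (Fin (2 * n + 1)) K)
        = (X vi * X vi1) * monomial b' 1 := by
      rw [hXX, monomial_mul, one_mul, ← key]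
    rw [List.length_cons, hdecomp, pow_succ']
    apply Ideal.mul_mem_mul
    · exact Ideal.subset_span ⟨vi, vi1, hadj, rfl⟩
    · apply ih b' (fun j hj => hedges j (List.mem_cons_of_mem i hj))
      intro v
      have hcv := hcount v
      rw [List.countP_cons] at hcv
      by_cases h1 : v = vi
      · subst h1
        rw [if_pos (decide_eq_true (Or.inl rfl : i = (vi : ℕ) ∨ i + 1 = (vi : ℕ)))] at hcv
        rw [hb'vi]
        omega
      · by_cases h2 : v = vi1
        · subst h2
          rw [if_pos
            (decide_eq_true (Or.inr rfl : i = (vi1 : ℕ) ∨ i + 1 = (vi1 : ℕ)))] at hcv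
          rw [hb'vi1]
          omega
        · rw [hb'other v h1 h2]
          omega

end ListPack
section Rotate

variable {K : Type*} [Field K]

lemma shift_adj {m : ℕ} [NeZero m] (c : Fin m) {i j : Fin m}
    (h : (cycleGraph m).Adj i j) : (cycleGraph m).Adj (i + c) (j + c) := by
  rw [cycleGraph_adj] at h ⊢
  obtain ⟨hne, h⟩ := h
  refine ⟨fun hc => hne (add_right_cancel hc), ?_⟩
  rcases h with h | h
  · exact Or.inl (by rw [h, add_right_comm])
  · exact Or.inr (by rw [h, add_right_comm])

lemma shift_cover {m : ℕ} [NeZero m] (c : Fin m) {S : Finset (Fin m)}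
    (h : IsVertexCover (cycleGraph m) S) :
    IsVertexCover (cycleGraph m) (S.image (· + c)) := by
  intro i j hadj
  rcases h (shift_adj (-c) hadj) with h1 | h1
  · exact Or.inl (Finset.mem_image.mpr ⟨i + -c, h1, neg_add_cancel_right i c⟩)
  · exact Or.inr (Finset.mem_image.mpr ⟨j + -c, h1, neg_add_cancel_right j c⟩)

lemma shift_min_cover {m : ℕ} [NeZero m] (c : Fin m) {S : Finset (Fin m)}
    (h : IsMinVertexCover (cycleGraph m) S) :
    IsMinVertexCover (cycleGraph m) (S.image (· + c)) := by
  refine ⟨shift_cover c h.1, ?_⟩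
  intro T hT hTcov
  have hinj : Function.Injective (· + c) := fun x y hxy => add_right_cancel hxy
  have hinj' : Function.Injective (· + (-c)) := fun x y hxy => add_right_cancel hxy
  set T' : Finset (Fin m) := T.image (· + (-c)) with hT'
  have hT'S : T' ⊆ S := by
    intro x hx
    obtain ⟨y, hy, rfl⟩ := Finset.mem_image.mp hx
    obtain ⟨s, hs, rfl⟩ := Finset.mem_image.mp (hT.1 hy)
    simpa [add_assoc] using hs
  have hcardlt : T.card < S.card := by
    have := Finset.card_lt_card hT
    rwa [Finset.card_image_of_injective S hinj] at this
  have hT'ss : T' ⊂ S := by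
    refine Finset.ssubset_iff_subset_ne.mpr ⟨hT'S, ?_⟩
    intro heq
    have : T'.card = T.card := Finset.card_image_of_injective T hinj'
    rw [heq] at this
    omega
  exact h.2 T' hT'ss (shift_cover (-c) hTcov)

lemma rename_mem_edgeIdeal_pow {m : ℕ} [NeZero m] (c : Fin m) {t : ℕ}
    {f : MvPolynomial (Fin m) K} (hf : f ∈ edgeIdeal K (cycleGraph m) ^ t) :
    rename (· + c) f ∈ edgeIdeal K (cycleGraph m) ^ t := by
  have hmap : Ideal.map ((rename (· + c) : MvPolynomial (Fin m) K →ₐ[K] MvPolynomial (Fin m) K) : MvPolynomial (Fin m) K →+* MvPolynomial (Fin m) K)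
      (edgeIdeal K (cycleGraph m)) ≤ edgeIdeal K (cycleGraph m) := by
    rw [edgeIdeal, Ideal.map_span, Ideal.span_le]
    rintro p ⟨q, ⟨i, j, hadj, rfl⟩, rfl⟩
    apply Ideal.subset_span
    exact ⟨i + c, j + c, shift_adj c hadj, by simp [rename_X]⟩
  have h1 : Ideal.map ((rename (· + c) : MvPolynomial (Fin m) K →ₐ[K] MvPolynomial (Fin m) K) : MvPolynomial (Fin m) K →+* MvPolynomial (Fin m) K)
      (edgeIdeal K (cycleGraph m) ^ t) ≤ edgeIdeal K (cycleGraph m) ^ t := by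
    rw [Ideal.map_pow]
    exact Ideal.pow_right_mono hmap t
  exact h1 (Ideal.mem_map_of_mem _ hf)

end Rotate
section ZeroCoord

variable {K : Type*} [Field K]

lemma monomial_mem_pow_of_last_zero {n : ℕ} (hn : 1 ≤ n) (b : Fin (2 * n + 1) →₀ ℕ)
    (hb : b ⟨2 * n, by omega⟩ = 0)
    (H : ∀ S, IsMinVertexCover (cycleGraph (2 * n + 1)) S → n + 1 ≤ ∑ i ∈ S, b i) :
    (monomial b 1 : MvPolynomial (Fin (2 * n + 1)) K)
      ∈ edgeIdeal K (cycleGraph (2 * n + 1)) ^ (n + 1) := by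
  haveI : NeZero (2 * n + 1) := ⟨by omega⟩
  classical
  set bn : ℕ → ℕ := fun v => if h : v < 2 * n + 1 then b ⟨v, h⟩ else 0 with hbn
  set g : ℕ → Fin (2 * n + 1) := fun v => ⟨v % (2 * n + 1), Nat.mod_lt _ (by omega)⟩ with hg
  have hgval : ∀ v : ℕ, v < 2 * n + 1 → (g v : ℕ) = v := by
    intro v hv
    simp only [hg]
    exact Nat.mod_eq_of_lt hv
  have Hpath : ∀ T : Finset ℕ, T ⊆ Finset.Ico 0 (2 * n) →
      (∀ i, 0 ≤ i → i + 1 < 2 * n → (i ∈ T ∨ i + 1 ∈ T)) → n + 1 ≤ ∑ v ∈ T, bn v := by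
    intro T hTsub hTcov
    have hTlt : ∀ v ∈ T, v < 2 * n := by
      intro v hv
      have := hTsub hv
      rw [Finset.mem_Ico] at this
      omega
    set S1 : Finset (Fin (2 * n + 1)) := insert ⟨2 * n, by omega⟩ (T.image g) with hS1
    have hcov1 : ∀ i : Fin (2 * n + 1), i ∈ S1 ∨ i + 1 ∈ S1 := by
      intro i
      have hival := i.isLt
      by_cases h1 : (i : ℕ) = 2 * n
      · left
        rw [hS1]
        apply Finset.mem_insert.mpr
        left
        exact Fin.ext h1
      · by_cases h2 : (i : ℕ) + 1 = 2 * n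
        · right
          rw [hS1]
          apply Finset.mem_insert.mpr
          left
          apply Fin.ext
          rw [fin_val_add_one, h2]
          exact Nat.mod_eq_of_lt (by omega)
        · have h3 : (i : ℕ) + 1 < 2 * n := by omega
          rcases hTcov (i : ℕ) (Nat.zero_le _) h3 with h | h
          · left
            rw [hS1]
            apply Finset.mem_insert.mpr
            right
            refine Finset.mem_image.mpr ⟨(i : ℕ), h, ?_⟩
            exact Fin.ext (hgval _ (by omega))
          · right
            rw [hS1]
            apply Finset.mem_insert.mpr
            right
            refine Finset.mem_image.mpr ⟨(i : ℕ) + 1, h, ?_⟩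
            apply Fin.ext
            rw [hgval _ (by omega), fin_val_add_one]
            exact (Nat.mod_eq_of_lt (by omega)).symm
    have hS1cov : IsVertexCover (cycleGraph (2 * n + 1)) S1 := by
      intro i j hadj
      rw [cycleGraph_adj] at hadj
      rcases hadj.2 with h | h
      · subst h
        exact hcov1 i
      · subst h
        exact (hcov1 j).symm
    obtain ⟨S, hSsub, hSmin⟩ := exists_min_cover_subset S1 hS1cov
    have h1 : n + 1 ≤ ∑ i ∈ S, b i := H S hSmin
    have h2 : ∑ i ∈ S, b i ≤ ∑ i ∈ S1, b i :=
      Finset.sum_le_sum_of_subset hSsub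
    have hnotmem : (⟨2 * n, by omega⟩ : Fin (2 * n + 1)) ∉ T.image g := by
      intro hmem
      obtain ⟨v, hv, hgv⟩ := Finset.mem_image.mp hmem
      have hval := congrArg Fin.val hgv
      rw [hgval v (by have := hTlt v hv; omega)] at hval
      have hlt := hTlt v hv
      simp only [] at hval
      omega
    have h3 : ∑ i ∈ S1, b i = ∑ v ∈ T.image g, b v := by
      rw [hS1, Finset.sum_insert hnotmem, hb, zero_add]
    have h4 : ∑ v ∈ T.image g, b v = ∑ v ∈ T, b (g v) := by
      apply Finset.sum_image
      intro x hx y hy hxy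
      have hxy' := congrArg Fin.val hxy
      rw [hgval x (by have := hTlt x hx; omega), hgval y (by have := hTlt y hy; omega)] at hxy'
      exact hxy'
    have h5 : ∑ v ∈ T, b (g v) = ∑ v ∈ T, bn v := by
      apply Finset.sum_congr rfl
      intro v hv
      have hvlt : v < 2 * n + 1 := by have := hTlt v hv; omega
      rw [hbn]
      simp only [dif_pos hvlt]
      congr 1
      exact Fin.ext (hgval v hvlt)
    rw [h3, h4, h5] at h2
    omega
  obtain ⟨L, hL1, hL2, hL3⟩ := path_pack ((n + 1) + 2 * n) (n + 1) 0 (2 * n) bn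
    (by omega) Hpath
  have hcount : ∀ v : Fin (2 * n + 1),
      (L.countP (fun i => decide (i = (v : ℕ) ∨ i + 1 = (v : ℕ)))) ≤ b v := by
    intro v
    have := hL3 (v : ℕ)
    rw [hbn] at this
    simp only [dif_pos v.isLt] at this
    simpa using this
  have := list_pack_mem (K := K) hn L b (fun i hi => (hL2 i hi).2) hcount
  rwa [hL1] at this

lemma monomial_mem_pow_of_zero {n : ℕ} (hn : 1 ≤ n) (a : Fin (2 * n + 1) →₀ ℕ)
    (z : Fin (2 * n + 1)) (hz : a z = 0)
    (H : ∀ S, IsMinVertexCover (cycleGraph (2 * n + 1)) S → n + 1 ≤ ∑ i ∈ S, a i) :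
    (monomial a 1 : MvPolynomial (Fin (2 * n + 1)) K)
      ∈ edgeIdeal K (cycleGraph (2 * n + 1)) ^ (n + 1) := by
  haveI : NeZero (2 * n + 1) := ⟨by omega⟩
  set c : Fin (2 * n + 1) := z + 1 with hc
  set b : Fin (2 * n + 1) →₀ ℕ := Finsupp.equivMapDomain (Equiv.addRight c).symm a with hbdef
  have hbv : ∀ v, b v = a (v + c) := by
    intro v
    rw [hbdef, Finsupp.equivMapDomain_apply, Equiv.symm_symm, Equiv.coe_addRight]
  have h21 : (⟨2 * n, by omega⟩ : Fin (2 * n + 1)) + 1 = 0 := by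
    apply Fin.ext
    rw [fin_val_add_one]
    simp [Nat.mod_self]
  have hb2n : b ⟨2 * n, by omega⟩ = 0 := by
    rw [hbv, hc]
    rw [add_comm z 1, ← add_assoc, h21, zero_add]
    exact hz
  have Hb : ∀ S, IsMinVertexCover (cycleGraph (2 * n + 1)) S → n + 1 ≤ ∑ i ∈ S, b i := by
    intro S hS
    have hinj : ∀ x ∈ S, ∀ y ∈ S, x + c = y + c → x = y :=
      fun x _ y _ h => add_right_cancel h
    have hsum : ∑ w ∈ S.image (· + c), a w = ∑ i ∈ S, a (i + c) :=
      Finset.sum_image hinj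
    have := H (S.image (· + c)) (shift_min_cover c hS)
    rw [hsum] at this
    calc n + 1 ≤ ∑ i ∈ S, a (i + c) := this
      _ = ∑ i ∈ S, b i := by
          apply Finset.sum_congr rfl
          intro i _
          rw [hbv]
  have hmem := monomial_mem_pow_of_last_zero (K := K) hn b hb2n Hb
  have hren := rename_mem_edgeIdeal_pow c hmem
  rw [rename_monomial] at hren
  have hmap : Finsupp.mapDomain (· + c) b = a := by
    have h1 : Finsupp.mapDomain (· + c) b = Finsupp.equivMapDomain (Equiv.addRight c) b := by
      rw [Finsupp.equivMapDomain_eq_mapDomain]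
      rfl
    rw [h1]
    ext v
    rw [Finsupp.equivMapDomain_apply, hbv]
    exact congrArg a ((Equiv.addRight c).apply_symm_apply v)
  rwa [hmap] at hren

end ZeroCoord
/-- For the edge ideal of the odd cycle `C_{2n+1}`,
`I^(n+1) = I^{n+1} + (x_1 x_2 ⋯ x_{2n+1})`, and the product of all the variables
does not lie in `I^{n+1}`. -/
theorem symbolicPower_succ_eq (K : Type*) [Field K] (n : ℕ) (hn : 1 ≤ n) :
    symbolicPower K (cycleGraph (2 * n + 1)) (n + 1)
      = edgeIdeal K (cycleGraph (2 * n + 1)) ^ (n + 1)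
        + Ideal.span {∏ i, (X i : MvPolynomial (Fin (2 * n + 1)) K)}
    ∧ (∏ i, (X i : MvPolynomial (Fin (2 * n + 1)) K))
        ∉ edgeIdeal K (cycleGraph (2 * n + 1)) ^ (n + 1) := by
  haveI : NeZero (2 * n + 1) := ⟨by omega⟩
  constructor
  · apply le_antisymm
    · -- symbolic power ≤ I^{n+1} + (x₁⋯x_{2n+1})
      intro f hf
      have hw : ∀ a ∈ f.support, ∀ S, IsMinVertexCover (cycleGraph (2 * n + 1)) S →
          n + 1 ≤ ∑ i ∈ S, a i := by
        intro a ha S hS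
        exact weight_of_mem_varIdeal_pow (mem_symbolicPower_iff.mp hf S hS) a ha
      rw [← support_sum_monomial_coeff f]
      apply Ideal.sum_mem
      intro a ha
      have hmono : (monomial a 1 : MvPolynomial (Fin (2 * n + 1)) K)
          ∈ edgeIdeal K (cycleGraph (2 * n + 1)) ^ (n + 1)
            + Ideal.span {∏ i, (X i : MvPolynomial (Fin (2 * n + 1)) K)} := by
        by_cases hall : ∀ i, 1 ≤ a i
        · exact Ideal.mem_sup_right (monomial_mem_span_prod_X hall)
        · push_neg at hall
          obtain ⟨z, hz⟩ := hall
          have hz0 : a z = 0 := by omega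
          exact Ideal.mem_sup_left
            (monomial_mem_pow_of_zero hn a z hz0 (fun S hS => hw a ha S hS))
      have hCm : (monomial a (coeff a f) : MvPolynomial (Fin (2 * n + 1)) K)
          = C (coeff a f) * monomial a 1 := by
        rw [C_mul_monomial, mul_one]
      rw [hCm]
      exact Ideal.mul_mem_left _ _ hmono
    · exact rhs_le_symbolic hn
  · -- x₁⋯x_{2n+1} ∉ I^{n+1}
    intro hmem
    set φ : MvPolynomial (Fin (2 * n + 1)) K →ₐ[K] Polynomial K :=
      aeval (fun _ => Polynomial.X) with hφ
    have hIle : Ideal.map (φ : MvPolynomial (Fin (2 * n + 1)) K →+* Polynomial K)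
        (edgeIdeal K (cycleGraph (2 * n + 1))) ≤ Ideal.span {Polynomial.X ^ 2} := by
      rw [edgeIdeal, Ideal.map_span, Ideal.span_le]
      rintro p ⟨q, ⟨i, j, _, rfl⟩, rfl⟩
      have heval : φ (X i * X j) = Polynomial.X ^ 2 := by
        rw [map_mul, hφ, aeval_X, aeval_X, sq]
      simp only [RingHom.coe_coe]
      rw [heval]
      exact Ideal.subset_span rfl
    have h2 : φ (∏ i, (X i : MvPolynomial (Fin (2 * n + 1)) K))
        ∈ Ideal.span {Polynomial.X ^ 2} ^ (n + 1) := by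
      have hmm := Ideal.mem_map_of_mem
        (φ : MvPolynomial (Fin (2 * n + 1)) K →+* Polynomial K) hmem
      rw [Ideal.map_pow] at hmm
      exact Ideal.pow_right_mono hIle (n + 1) hmm
    rw [Ideal.span_singleton_pow, ← pow_mul] at h2
    have hφprod : φ (∏ i, (X i : MvPolynomial (Fin (2 * n + 1)) K))
        = Polynomial.X ^ (2 * n + 1) := by
      rw [map_prod]
      have : ∀ i : Fin (2 * n + 1), φ (X i) = Polynomial.X := fun i => by rw [hφ, aeval_X]
      rw [Finset.prod_congr rfl (fun i _ => this i), Finset.prod_const, Finset.card_univ,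
        Fintype.card_fin]
    rw [hφprod, Ideal.mem_span_singleton] at h2
    rw [Polynomial.X_pow_dvd_iff] at h2
    have hcoeff := h2 (2 * n + 1) (by omega)
    rw [Polynomial.coeff_X_pow, if_pos rfl] at hcoeff
    exact one_ne_zero hcoeff
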